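/- Let n ∈ {3,4} and V a free ℤ/nℤ-module of rank 2. For a basis (P,Q) of V, let φ_{P,Q} ∈ SL(V) be the map with φ_{P,Q}(P)=P and φ_{P,Q}(Q)=P+Q. Then for any u ∈ GL(V), the image of φ_{u(P),u(Q)} in the abelianization SL(V)^{ab} equals the image of φ_{P,Q}^{det u}. -/

import Mathlib

/-- The special linear group of a module: automorphisms of determinant 1. -/
noncomputable def SLmod (R : Type*) (V : Type*) [CommRing R] [AddCommGroup V] [Module R V] :
    Subgroup (V ≃ₗ[R] V) :=
  (LinearEquiv.det : (V ≃ₗ[R] V) →* Rˣ).ker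

/-- Let `n ∈ {3,4}` and `V` a free `ℤ/nℤ`-module of rank 2 (with basis `b`, and
`(P, Q) := (b 0, b 1)`). Let `φ_{P,Q} ∈ SL(V)` be the map with `φ_{P,Q}(P) = P` and
`φ_{P,Q}(Q) = P + Q` (here `g` with `det g = 1`, `g P = P`, `g Q = P + Q`). Then for any
`u ∈ GL(V)`, the image in `SL(V)^{ab}` of `φ_{u(P),u(Q)}` (here `g'` with `det g' = 1`,
`g' (u P) = u P`, `g' (u Q) = u P + u Q`) equals the image of `φ_{P,Q} ^ (det u)`. -/
theorem stmt_6 (n : ℕ) (hn : n = 3 ∨ n = 4) (V : Type*) [AddCommGroup V]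
    [Module (ZMod n) V] (b : Module.Basis (Fin 2) (ZMod n) V)
    (P Q : V) (hP : P = b 0) (hQ : Q = b 1)
    (g : V ≃ₗ[ZMod n] V) (hgdet : LinearEquiv.det g = 1)
    (hgP : g P = P) (hgQ : g Q = P + Q)
    (u : V ≃ₗ[ZMod n] V)
    (g' : V ≃ₗ[ZMod n] V) (hg'det : LinearEquiv.det g' = 1)
    (hg'P : g' (u P) = u P) (hg'Q : g' (u Q) = u P + u Q) :
    Abelianization.of (⟨g', hg'det⟩ : SLmod (ZMod n) V) =
      Abelianization.of ((⟨g, hgdet⟩ : SLmod (ZMod n) V) ^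
        ((LinearEquiv.det u : (ZMod n)ˣ) : ZMod n).val) := by
  have : NeZero n := ⟨by rcases hn with h|h <;> simp [h]⟩
  subst hP hQ
  set d : (ZMod n)ˣ := LinearEquiv.det u with hd
  set c : ZMod n := (d : ZMod n) with hc
  set c' : ZMod n := ((d⁻¹ : (ZMod n)ˣ) : ZMod n) with hc'
  have hcc' : c * c' = 1 := by simp [hc, hc', ← Units.val_mul]
  have hc'c : c' * c = 1 := by rw [mul_comm]; exact hcc'
  let f : V →ₗ[ZMod n] V := b.constr ℕ ![c • b 0, b 1]
  let f' : V →ₗ[ZMod n] V := b.constr ℕ ![c' • b 0, b 1]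
  have hff' : f.comp f' = LinearMap.id := by
    apply b.ext; intro i; fin_cases i <;>
      simp [f, f', Module.Basis.constr_basis, smul_smul, hcc', hc'c]
  have hf'f : f'.comp f = LinearMap.id := by
    apply b.ext; intro i; fin_cases i <;>
      simp [f, f', Module.Basis.constr_basis, smul_smul, hcc', hc'c]
  set D : V ≃ₗ[ZMod n] V := LinearEquiv.ofLinear f f' hff' hf'f with hD
  have hDdet : LinearEquiv.det D = d := by
    ext
    rw [LinearEquiv.coe_det]
    have : (D : V →ₗ[ZMod n] V) = f := rfl
    rw [this, ← LinearMap.det_toMatrix b f, Matrix.det_fin_two]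
    simp [LinearMap.toMatrix_apply, f, Module.Basis.constr_basis, hc]
  have hDinv0 : D⁻¹ (b 0) = c' • b 0 := by
    show D.symm (b 0) = c' • b 0
    simp [hD, LinearEquiv.ofLinear_symm_apply, f', Module.Basis.constr_basis]
  have hDinv1 : D⁻¹ (b 1) = b 1 := by
    show D.symm (b 1) = b 1
    simp [hD, LinearEquiv.ofLinear_symm_apply, f', Module.Basis.constr_basis]
  set m : ℕ := ((LinearEquiv.det u : (ZMod n)ˣ) : ZMod n).val with hm
  have hmc : (m : ZMod n) = c := by rw [hm]; simp [ZMod.natCast_val, ZMod.cast_id, hc, hd, LinearEquiv.coe_det]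
  -- powers of g on the basis
  have hpow : ∀ k : ℕ, (g ^ k) (b 0) = b 0 ∧ (g ^ k) (b 1) = (k : ZMod n) • b 0 + b 1 := by
    intro k
    induction k with
    | zero => exact ⟨rfl, by simp⟩
    | succ k ih =>
      have hmul : ∀ x, (g ^ (k + 1)) x = (g ^ k) (g x) := by
        intro x; rw [pow_succ]; rfl
      constructor
      · rw [hmul, hgP, ih.1]
      · rw [hmul, hgQ, map_add, ih.1, ih.2]
        push_cast
        rw [add_smul, one_smul]
        abel
  set u' : V ≃ₗ[ZMod n] V := u * D⁻¹ with hu'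
  have hu'det : LinearEquiv.det u' = 1 := by
    rw [hu', map_mul, map_inv, hDdet, ← hd, mul_inv_cancel]
  have hu'0 : u' (b 0) = c' • u (b 0) := by
    show u (D⁻¹ (b 0)) = c' • u (b 0)
    rw [hDinv0, map_smul]
  have hu'1 : u' (b 1) = u (b 1) := by
    show u (D⁻¹ (b 1)) = u (b 1)
    rw [hDinv1]
  have key0 : g' (u' (b 0)) = u' ((g ^ m) (b 0)) := by
    rw [(hpow m).1, hu'0, map_smul, hg'P]
  have key1 : g' (u' (b 1)) = u' ((g ^ m) (b 1)) := by
    rw [hu'1, hg'Q, (hpow m).2, map_add, map_smul, hu'0, hu'1, smul_smul, hmc, hcc', one_smul]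
  have key : g' * u' = u' * g ^ m := by
    apply LinearEquiv.toLinearMap_injective
    apply b.ext
    intro i
    fin_cases i
    · exact key0
    · exact key1
  have hg'eq : g' = u' * g ^ m * u'⁻¹ := eq_mul_inv_of_mul_eq key
  have hsub : (⟨g', hg'det⟩ : SLmod (ZMod n) V) =
      ⟨u', hu'det⟩ * (⟨g, hgdet⟩ : SLmod (ZMod n) V) ^ m * (⟨u', hu'det⟩ : SLmod (ZMod n) V)⁻¹ := by
    apply Subtype.ext
    simpa using hg'eq
  rw [hsub, map_mul, map_mul, map_inv]
  exact mul_inv_cancel_comm _ _
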